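/- For the 1-D quantization energy F(x_1,…,x_N) = Σ_i ∫_{V_i} (x_i − y)² dy on [0,1] with ordered generators and Voronoi cells V_i determined by midpoints, the uniform configuration x_i = (2i−1)/(2N) yields F = 1/(12N²), and this value is the minimum of F over all generator configurations. -/

import Mathlib

open MeasureTheory Finset

/-- Voronoi cell endpoints (midpoints) for generators `x 0, …, x (N-1)` on
`[0,1]`: `m 0 = 0`, `m N = 1`, `m i = (x (i-1) + x i)/2` for `0 < i < N`. -/
noncomputable def voronoiMid (N : ℕ) (x : ℕ → ℝ) (i : ℕ) : ℝ :=
  if i = 0 then 0 else if i = N then 1 else (x (i - 1) + x i) / 2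

/-- One-dimensional quantization energy
`F(x) = Σ_i ∫_{V_i} (x_i − y)² dy` with Voronoi cells `V_i = [m_i, m_{i+1}]`. -/
noncomputable def quantizationEnergy (N : ℕ) (x : ℕ → ℝ) : ℝ :=
  ∑ i ∈ Finset.range N,
    ∫ y in Set.Icc (voronoiMid N x i) (voronoiMid N x (i + 1)), (x i - y) ^ 2

lemma integ_Icc (a b c : ℝ) (h : a ≤ b) :
    ∫ y in Set.Icc a b, (c - y) ^ 2 = ((c - a) ^ 3 + (b - c) ^ 3) / 3 := by
  rw [MeasureTheory.integral_Icc_eq_integral_Ioc, ← intervalIntegral.integral_of_le h]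
  have hd : ∀ y ∈ Set.uIcc a b, HasDerivAt (fun z : ℝ => -(c - z) ^ 3 / 3) ((c - y) ^ 2) y := by
    intro y _
    have h1 : HasDerivAt (fun z : ℝ => c - z) (-1) y := (hasDerivAt_id y).const_sub c
    have h2 := ((h1.pow 3).neg).div_const 3
    exact h2.congr_deriv (by ring)
  rw [intervalIntegral.integral_eq_sub_of_hasDerivAt hd
    (((continuous_const.sub continuous_id).pow 2).intervalIntegrable a b)]
  ring

lemma sum_range_two_mul_real (g : ℕ → ℝ) (n : ℕ) :
    ∑ j ∈ Finset.range (2 * n), g j = ∑ i ∈ Finset.range n, (g (2 * i) + g (2 * i + 1)) := by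
  induction n with
  | zero => simp
  | succ n ih =>
      rw [Nat.mul_succ, Finset.sum_range_succ, Finset.sum_range_succ, Finset.sum_range_succ, ih]
      ring

/-- Lower bound for the quantization energy in terms of cell gap lengths. -/
lemma energy_ge (N : ℕ) (hN : 0 < N) (x : ℕ → ℝ) (h0 : 0 ≤ x 0)
    (hmono : ∀ i j, i < j → j < N → x i < x j) (h1 : x (N - 1) ≤ 1) :
    1 / (12 * (N : ℝ) ^ 2) ≤ quantizationEnergy N x := by
  set m := voronoiMid N x with hm
  have hml : ∀ i < N, m i ≤ x i := by
    intro i hi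
    rcases Nat.eq_zero_or_pos i with rfl | hpos
    · simpa [hm, voronoiMid] using h0
    · have hiN : i ≠ N := hi.ne
      have : x (i - 1) < x i := hmono _ _ (Nat.sub_lt hpos one_pos) hi
      simp only [hm, voronoiMid, hpos.ne', if_false, hiN]
      linarith
  have hmr : ∀ i < N, x i ≤ m (i + 1) := by
    intro i hi
    rcases eq_or_lt_of_le (Nat.succ_le_of_lt hi) with he | hlt
    · have hm1 : m (i + 1) = 1 := by
        rw [hm]; unfold voronoiMid; rw [if_neg (Nat.succ_ne_zero i), if_pos he]
      rw [hm1, show i = N - 1 by omega]; exact h1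
    · have : x i < x (i + 1) := hmono _ _ (Nat.lt_succ_self i) hlt
      simp only [hm, voronoiMid, Nat.succ_ne_zero, if_false, hlt.ne, Nat.add_sub_cancel]
      linarith
  -- the 2N gaps
  set t : ℕ → ℝ := fun j => if j % 2 = 0 then x (j / 2) - m (j / 2) else m (j / 2 + 1) - x (j / 2)
    with ht
  have ht0 : ∀ i, t (2 * i) = x i - m i := by
    intro i; simp [ht, Nat.mul_div_cancel_left _ (by norm_num : 0 < 2), Nat.mul_mod_right]
  have ht1 : ∀ i, t (2 * i + 1) = m (i + 1) - x i := by
    intro i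
    have h2 : (2 * i + 1) % 2 = 1 := by omega
    have h3 : (2 * i + 1) / 2 = i := by omega
    simp [ht, h2, h3]
  have htnn : ∀ j ∈ Finset.range (2 * N), 0 ≤ t j := by
    intro j hj
    rw [Finset.mem_range] at hj
    rcases Nat.even_or_odd j with ⟨i, hi⟩ | ⟨i, hi⟩
    · have hiN : i < N := by omega
      have : j = 2 * i := by omega
      rw [this, ht0]
      linarith [hml i hiN]
    · have hiN : i < N := by omega
      have : j = 2 * i + 1 := by omega
      rw [this, ht1]
      linarith [hmr i hiN]
  have htsum : ∑ j ∈ Finset.range (2 * N), t j = 1 := by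
    rw [sum_range_two_mul_real]
    have : ∀ i, t (2 * i) + t (2 * i + 1) = m (i + 1) - m i := by
      intro i; rw [ht0, ht1]; ring
    rw [Finset.sum_congr rfl fun i _ => this i, Finset.sum_range_sub]
    simp [hm, voronoiMid, hN.ne']
  have henergy : quantizationEnergy N x = (∑ j ∈ Finset.range (2 * N), t j ^ 3) / 3 := by
    rw [sum_range_two_mul_real, quantizationEnergy]
    have key : ∀ i ∈ Finset.range N,
        (∫ y in Set.Icc (voronoiMid N x i) (voronoiMid N x (i + 1)), (x i - y) ^ 2)
          = (t (2 * i) ^ 3 + t (2 * i + 1) ^ 3) / 3 := by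
      intro i hi
      rw [Finset.mem_range] at hi
      have hab : m i ≤ m (i + 1) := le_trans (hml i hi) (hmr i hi)
      rw [ht0, ht1, show voronoiMid N x i = m i from rfl,
        show voronoiMid N x (i + 1) = m (i + 1) from rfl, integ_Icc _ _ _ hab]
    rw [Finset.sum_congr rfl key, ← Finset.sum_div]
  have hjensen := pow_sum_div_card_le_sum_pow (s := Finset.range (2 * N)) (f := t) htnn 2
  rw [htsum, Finset.card_range] at hjensen
  have hNpos : (0 : ℝ) < N := Nat.cast_pos.mpr hN
  have hcard : ((2 * N : ℕ) : ℝ) ^ 2 = 4 * (N : ℝ) ^ 2 := by push_cast; ring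
  rw [hcard] at hjensen
  have : (1 : ℝ) ^ (2 + 1) / (4 * (N : ℝ) ^ 2) = 1 / (4 * (N : ℝ) ^ 2) := by norm_num
  rw [this] at hjensen
  have h3 : (1 : ℝ) / (12 * (N : ℝ) ^ 2) = (1 / (4 * (N : ℝ) ^ 2)) / 3 := by ring
  rw [henergy, h3]
  gcongr

/-- the uniform configuration `x_i = (2i+1)/(2N)` gives
`F = 1/(12N²)`, which is the minimum over all ordered configurations. -/
theorem uniform_configuration_minimizes_quantization_energy
    (N : ℕ) (hN : 0 < N) :
    quantizationEnergy N (fun i => (2 * (i : ℝ) + 1) / (2 * N)) = 1 / (12 * N ^ 2) ∧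
    ∀ x : ℕ → ℝ, 0 ≤ x 0 → (∀ i j, i < j → j < N → x i < x j) → x (N - 1) ≤ 1 →
      quantizationEnergy N (fun i => (2 * (i : ℝ) + 1) / (2 * N))
        ≤ quantizationEnergy N x := by
  have hNpos : (0 : ℝ) < N := Nat.cast_pos.mpr hN
  set xu : ℕ → ℝ := fun i => (2 * (i : ℝ) + 1) / (2 * N) with hxu
  have hmid : ∀ i ≤ N, voronoiMid N xu i = (i : ℝ) / N := by
    intro i hi
    rcases Nat.eq_zero_or_pos i with rfl | hpos
    · simp [voronoiMid]
    rcases eq_or_lt_of_le hi with rfl | hlt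
    · simp [voronoiMid, hpos.ne', hNpos.ne']
    · have hcast : ((i - 1 : ℕ) : ℝ) = (i : ℝ) - 1 := by
        rw [Nat.cast_sub hpos]; simp
      simp only [voronoiMid, hpos.ne', if_false, hlt.ne, if_false, hxu, hcast]
      field_simp
      ring
  have huval : quantizationEnergy N xu = 1 / (12 * (N : ℝ) ^ 2) := by
    rw [quantizationEnergy]
    have hterm : ∀ i ∈ Finset.range N,
        (∫ y in Set.Icc (voronoiMid N xu i) (voronoiMid N xu (i + 1)), (xu i - y) ^ 2)
          = 1 / (12 * (N : ℝ) ^ 3) := by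
      intro i hi
      rw [Finset.mem_range] at hi
      rw [hmid i hi.le, hmid (i + 1) hi]
      have hab : (i : ℝ) / N ≤ ((i + 1 : ℕ) : ℝ) / N := by
        rw [div_le_div_iff₀ hNpos hNpos]; push_cast; nlinarith
      rw [integ_Icc _ _ _ hab]
      have h1 : xu i - (i : ℝ) / N = 1 / (2 * N) := by
        simp only [hxu]; field_simp; ring
      have h2 : ((i + 1 : ℕ) : ℝ) / N - xu i = 1 / (2 * N) := by
        simp only [hxu]; push_cast; field_simp; ring
      rw [h1, h2]
      field_simp
      ring
    rw [Finset.sum_congr rfl hterm, Finset.sum_const, Finset.card_range, nsmul_eq_mul]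
    field_simp
  refine ⟨by rw [huval], fun x h0 hmono h1 => ?_⟩
  rw [huval]
  exact energy_ge N hN x h0 hmono h1
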